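/- Under pair Sato-Tate equidistribution for (C, D) and with a(p) = C(p) - χ₁(p)/(2√p), b(p) = D(p) - χ₂(p)/(2√p) as above, the set of primes p with a(p)·b(p) > 0 has natural density 1/2, and the set of primes with a(p)·b(p) = 0 has natural density 0. -/
import Mathlib


open MeasureTheory Filter Real Set

noncomputable def muST : Measure ℝ :=
  (volume.restrict (Icc (-1 : ℝ) 1)).withDensity fun t =>
    ENNReal.ofReal ((2 / π) * Real.sqrt (1 - t ^ 2))

open scoped Classical in
noncomputable def primeCount (S : Set ℕ) (x : ℕ) : ℕ :=
  ((Finset.range (x + 1)).filter fun p => p.Prime ∧ p ∈ S).card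

noncomputable def primePi (x : ℕ) : ℕ :=
  ((Finset.range (x + 1)).filter Nat.Prime).card

def HasNaturalDensity (S : Set ℕ) (δ : ℝ) : Prop :=
  Tendsto (fun x : ℕ => (primeCount S x : ℝ) / (primePi x : ℝ)) atTop (nhds δ)

def PairSatoTateEquidistributed (C D : ℕ → ℝ) : Prop :=
  ∀ a₁ b₁ a₂ b₂ : ℝ, -1 ≤ a₁ → a₁ ≤ b₁ → b₁ ≤ 1 → -1 ≤ a₂ → a₂ ≤ b₂ → b₂ ≤ 1 →
    Tendsto
      (fun x : ℕ =>
        (primeCount {p | C p ∈ Icc a₁ b₁ ∧ D p ∈ Icc a₂ b₂} x : ℝ) / (primePi x : ℝ))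
      atTop (nhds ((muST (Icc a₁ b₁)).toReal * (muST (Icc a₂ b₂)).toReal))

namespace STAux

noncomputable def g (t : ℝ) : ℝ := (2 / π) * Real.sqrt (1 - t ^ 2)

lemma g_cont : Continuous g :=
  continuous_const.mul (Real.continuous_sqrt.comp (continuous_const.sub (continuous_pow 2)))

lemma g_nonneg (t : ℝ) : 0 ≤ g t :=
  mul_nonneg (by positivity) (Real.sqrt_nonneg _)

noncomputable def K (c : ℝ) : ℝ := ∫ x in (-1:ℝ)..c, g x

lemma K_cont : Continuous K :=
  intervalIntegral.continuous_primitive (fun a b => g_cont.intervalIntegrable (μ := volume) a b) _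

lemma K_interval {a b : ℝ} : ∫ x in a..b, g x = K b - K a := by
  have h1 := intervalIntegral.integral_add_adjacent_intervals
    (g_cont.intervalIntegrable (μ := volume) (-1) a) (g_cont.intervalIntegrable (μ := volume) a b)
  unfold K; linarith

lemma K_neg_one : K (-1) = 0 := intervalIntegral.integral_same

lemma K_one : K 1 = 1 := by
  unfold K g
  rw [intervalIntegral.integral_const_mul, integral_sqrt_one_sub_sq]
  field_simp

lemma K_zero : K 0 = 1 / 2 := by
  have hsymm : ∫ x in (0:ℝ)..1, g x = K 0 := by
    have h : ∫ x in (0:ℝ)..1, g x = ∫ x in (0:ℝ)..1, g (-x) := by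
      apply intervalIntegral.integral_congr
      intro x _
      simp [g, neg_pow]
    rw [h, intervalIntegral.integral_comp_neg]
    simp [K]
  have h1 := intervalIntegral.integral_add_adjacent_intervals
    (g_cont.intervalIntegrable (μ := volume) (-1) 0) (g_cont.intervalIntegrable (μ := volume) 0 1)
  have := K_one
  unfold K at *
  linarith

lemma muST_Icc {a b : ℝ} (h1 : -1 ≤ a) (hab : a ≤ b) (h2 : b ≤ 1) :
    (muST (Icc a b)).toReal = K b - K a := by
  have hmeas : MeasurableSet (Icc a b) := measurableSet_Icc
  have hsub : Icc a b ∩ Icc (-1:ℝ) 1 = Icc a b :=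
    inter_eq_left.mpr (Icc_subset_Icc h1 h2)
  have heq : muST (Icc a b) = ∫⁻ t in Icc a b, ENNReal.ofReal (g t) := by
    rw [muST, withDensity_apply _ hmeas, Measure.restrict_restrict hmeas, hsub]
    rfl
  rw [heq]
  have hint : ∫ t in Icc a b, g t = (∫⁻ t in Icc a b, ENNReal.ofReal (g t)).toReal := by
    rw [integral_eq_lintegral_of_nonneg_ae (Eventually.of_forall g_nonneg)
      g_cont.aestronglyMeasurable]
  rw [← hint, integral_Icc_eq_integral_Ioc, ← intervalIntegral.integral_of_le hab, K_interval]

lemma count_le_of_subset {S T : Set ℕ} (N : ℕ)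
    (h : ∀ p, p.Prime → N ≤ p → p ∈ S → p ∈ T) (x : ℕ) :
    primeCount S x ≤ primeCount T x + N := by
  classical
  unfold primeCount
  have hsub : ((Finset.range (x+1)).filter fun p => p.Prime ∧ p ∈ S) ⊆
      ((Finset.range (x+1)).filter fun p => p.Prime ∧ p ∈ T) ∪ Finset.range N := by
    intro p hp
    simp only [Finset.mem_filter, Finset.mem_union, Finset.mem_range] at *
    obtain ⟨hpx, hpP, hpS⟩ := hp
    by_cases hN : N ≤ p
    · exact Or.inl ⟨hpx, hpP, h p hpP hN hpS⟩
    · exact Or.inr (by omega)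
  calc ((Finset.range (x+1)).filter fun p => p.Prime ∧ p ∈ S).card
      ≤ (((Finset.range (x+1)).filter fun p => p.Prime ∧ p ∈ T) ∪ Finset.range N).card :=
        Finset.card_le_card hsub
    _ ≤ ((Finset.range (x+1)).filter fun p => p.Prime ∧ p ∈ T).card + (Finset.range N).card :=
        Finset.card_union_le _ _
    _ = _ := by simp

lemma count_union_le (S T : Set ℕ) (x : ℕ) :
    primeCount (S ∪ T) x ≤ primeCount S x + primeCount T x := by
  classical
  unfold primeCount
  refine le_trans (Finset.card_le_card (t := _ ∪ _) ?_) (Finset.card_union_le _ _)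
  intro p hp
  simp only [Finset.mem_filter, Finset.mem_union, Set.mem_union] at *
  tauto

lemma count_add_le {S T : Set ℕ} (h : ∀ p, p ∈ S → p ∉ T) (x : ℕ) :
    primeCount S x + primeCount T x ≤ primeCount (S ∪ T) x := by
  classical
  unfold primeCount
  rw [← Finset.card_union_of_disjoint]
  · apply Finset.card_le_card
    intro p hp
    simp only [Finset.mem_filter, Finset.mem_union, Set.mem_union] at *
    tauto
  · rw [Finset.disjoint_left]
    intro p hp1 hp2
    simp only [Finset.mem_filter] at *
    exact h p hp1.2.2 hp2.2.2

lemma primePi_mono : Monotone primePi := by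
  intro a b hab
  unfold primePi
  exact Finset.card_le_card (Finset.filter_subset_filter _ (by
    intro p hp; simp only [Finset.mem_range] at *; omega))

lemma primePi_tendsto : Tendsto (fun x : ℕ => (primePi x : ℝ)) atTop atTop := by
  have h1 : Tendsto primePi atTop atTop := by
    apply tendsto_atTop_atTop_of_monotone primePi_mono
    intro b
    obtain ⟨t, hts, htc⟩ := Nat.infinite_setOf_prime.exists_subset_card_eq b
    rcases t.eq_empty_or_nonempty with rfl | hne
    · exact ⟨0, by simp at htc; omega⟩
    refine ⟨t.max' hne, ?_⟩
    have hss : t ⊆ (Finset.range (t.max' hne + 1)).filter Nat.Prime := by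
      intro p hp
      simp only [Finset.mem_filter, Finset.mem_range]
      exact ⟨by have := Finset.le_max' t p hp; omega, hts hp⟩
    calc b = t.card := htc.symm
      _ ≤ _ := Finset.card_le_card hss
  exact tendsto_natCast_atTop_atTop.comp h1

lemma pert_lt {ε : ℝ} (hε : 0 < ε) {c : ℝ} (hc : c = -1 ∨ c = 0 ∨ c = 1) {p : ℕ}
    (hp : (⌈(1/(2*ε))^2⌉₊ + 1 : ℕ) ≤ p) : |c / (2 * Real.sqrt p)| < ε := by
  have hpr : ((1/(2*ε))^2 : ℝ) < p := by
    have h1 : ((⌈(1/(2*ε))^2⌉₊ : ℕ) : ℝ) < p := by exact_mod_cast (by omega : ⌈(1/(2*ε))^2⌉₊ < p)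
    have h2 : ((1/(2*ε))^2 : ℝ) ≤ (⌈(1/(2*ε))^2⌉₊ : ℕ) := Nat.le_ceil _
    linarith
  have hsq : 1/(2*ε) < Real.sqrt p := by
    have h := Real.sqrt_lt_sqrt (by positivity) hpr
    rwa [Real.sqrt_sq (by positivity)] at h
  have hsp : 0 < Real.sqrt p := lt_of_le_of_lt (by positivity) hsq
  have hkey : 1 / (2 * Real.sqrt p) < ε := by
    rw [div_lt_iff₀ (by positivity)]
    rw [div_lt_iff₀ (by positivity)] at hsq
    nlinarith
  have hcle : |c| ≤ 1 := by rcases hc with h | h | h <;> simp [h]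
  have h2sp : (0:ℝ) < 2 * Real.sqrt p := by linarith
  calc |c / (2 * Real.sqrt p)| = |c| / (2 * Real.sqrt p) := by
        rw [abs_div, abs_of_pos h2sp]
    _ ≤ 1 / (2 * Real.sqrt p) := (div_le_div_iff_of_pos_right h2sp).mpr hcle
    _ < ε := hkey

end STAux

open STAux

theorem density_half_product_pos_and_zero (C D : ℕ → ℝ) (χ₁ χ₂ : ℕ → ℝ)
    (hC : ∀ p : ℕ, p.Prime → C p ∈ Icc (-1 : ℝ) 1)
    (hD : ∀ p : ℕ, p.Prime → D p ∈ Icc (-1 : ℝ) 1)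
    (hχ₁ : ∀ p : ℕ, χ₁ p = -1 ∨ χ₁ p = 0 ∨ χ₁ p = 1)
    (hχ₂ : ∀ p : ℕ, χ₂ p = -1 ∨ χ₂ p = 0 ∨ χ₂ p = 1)
    (hST : PairSatoTateEquidistributed C D) :
    HasNaturalDensity
        {p | 0 < (C p - χ₁ p / (2 * Real.sqrt p)) * (D p - χ₂ p / (2 * Real.sqrt p))}
        (1 / 2) ∧
      HasNaturalDensity
        {p | (C p - χ₁ p / (2 * Real.sqrt p)) * (D p - χ₂ p / (2 * Real.sqrt p)) = 0}
        0 := by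
  have pi_top := STAux.primePi_tendsto
  constructor
  · rw [HasNaturalDensity, Metric.tendsto_nhds]
    intro η hη
    -- choose ε
    obtain ⟨ε, hε0, hε1, hLd, hUd⟩ :
        ∃ ε : ℝ, 0 < ε ∧ ε ≤ 1 ∧
          |(K 1 - K ε) * (K 1 - K ε) + K (-ε) * K (-ε) - 1/2| < η/2 ∧
          |(K 1 - K (-ε)) * (K 1 - K (-ε)) + K ε * K ε - 1/2| < η/2 := by
      have hKn : Continuous fun c : ℝ => K (-c) := K_cont.comp continuous_neg
      have hFc : Continuous (fun c : ℝ =>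
          |(K 1 - K c) * (K 1 - K c) + K (-c) * K (-c) - 1/2| +
          |(K 1 - K (-c)) * (K 1 - K (-c)) + K c * K c - 1/2|) := by
        apply Continuous.add
        · exact ((((continuous_const.sub K_cont).mul (continuous_const.sub K_cont)).add
            (hKn.mul hKn)).sub continuous_const).abs
        · exact ((((continuous_const.sub hKn).mul (continuous_const.sub hKn)).add
            (K_cont.mul K_cont)).sub continuous_const).abs
      obtain ⟨δ, hδ0, hδ⟩ := Metric.continuousAt_iff.mp hFc.continuousAt (η/2) (by linarith)
      have hd : dist (min (δ/2) 1) 0 < δ := by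
        rw [Real.dist_eq, sub_zero, abs_of_pos (by positivity)]
        calc min (δ/2) 1 ≤ δ/2 := min_le_left _ _
          _ < δ := by linarith
      have h1 := hδ hd
      rw [Real.dist_eq] at h1
      have hF0 : |(K 1 - K (0:ℝ)) * (K 1 - K 0) + K (-(0:ℝ)) * K (-(0:ℝ)) - 1/2| +
          |(K 1 - K (-(0:ℝ))) * (K 1 - K (-(0:ℝ))) + K (0:ℝ) * K 0 - 1/2| = 0 := by
        rw [neg_zero, K_zero, K_one]
        norm_num
      rw [hF0, sub_zero] at h1
      have hFε := lt_of_le_of_lt (le_abs_self _) h1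
      exact ⟨min (δ/2) 1, by positivity, min_le_right _ _,
        by linarith [abs_nonneg ((K 1 - K (-(min (δ/2) 1))) * (K 1 - K (-(min (δ/2) 1)))
          + K (min (δ/2) 1) * K (min (δ/2) 1) - 1/2)],
        by linarith [abs_nonneg ((K 1 - K (min (δ/2) 1)) * (K 1 - K (min (δ/2) 1))
          + K (-(min (δ/2) 1)) * K (-(min (δ/2) 1)) - 1/2)]⟩
    -- measure values
    have hm1 : (muST (Icc ε 1)).toReal = K 1 - K ε := muST_Icc (by linarith) hε1 le_rfl
    have hm2 : (muST (Icc (-1) (-ε))).toReal = K (-ε) := by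
      rw [muST_Icc le_rfl (by linarith) (by linarith), K_neg_one, sub_zero]
    have hm3 : (muST (Icc (-ε) 1)).toReal = K 1 - K (-ε) :=
      muST_Icc (by linarith) (by linarith) le_rfl
    have hm4 : (muST (Icc (-1) ε)).toReal = K ε := by
      rw [muST_Icc le_rfl (by linarith) hε1, K_neg_one, sub_zero]
    -- limits of rectangle sums
    have h12 := (hST ε 1 ε 1 (by linarith) (by linarith) le_rfl (by linarith) (by linarith)
      le_rfl).add (hST (-1) (-ε) (-1) (-ε) le_rfl (by linarith) (by linarith) le_rfl
      (by linarith) (by linarith))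
    rw [hm1, hm2] at h12
    have h34 := (hST (-ε) 1 (-ε) 1 (by linarith) (by linarith) le_rfl (by linarith) (by linarith)
      le_rfl).add (hST (-1) ε (-1) ε le_rfl (by linarith) hε1 le_rfl (by linarith) hε1)
    rw [hm3, hm4] at h34
    -- events
    have E1 := (Metric.tendsto_nhds.mp h12 (η/4) (by linarith)).mono
      (fun x hx => by rwa [Real.dist_eq] at hx)
    have E2 := (Metric.tendsto_nhds.mp h34 (η/4) (by linarith)).mono
      (fun x hx => by rwa [Real.dist_eq] at hx)
    have hN0 : Tendsto (fun x : ℕ => ((⌈(1/(2*ε))^2⌉₊ + 1 : ℕ) : ℝ)/(primePi x : ℝ))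
        atTop (nhds 0) := Tendsto.div_atTop tendsto_const_nhds pi_top
    have E3 := (Metric.tendsto_nhds.mp hN0 (η/4) (by linarith)).mono
      (fun x hx => by rw [Real.dist_eq, sub_zero] at hx; exact lt_of_le_of_lt (le_abs_self _) hx)
    have E4 := pi_top.eventually_ge_atTop 1
    -- count inequalities
    have hcnt_low : ∀ x, primeCount {p | C p ∈ Icc ε 1 ∧ D p ∈ Icc ε 1} x +
        primeCount {p | C p ∈ Icc (-1) (-ε) ∧ D p ∈ Icc (-1) (-ε)} x ≤
        primeCount {p | 0 < (C p - χ₁ p / (2 * Real.sqrt p)) *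
          (D p - χ₂ p / (2 * Real.sqrt p))} x + (⌈(1/(2*ε))^2⌉₊ + 1) := by
      intro x
      refine le_trans (count_add_le ?_ x) (count_le_of_subset _ ?_ x)
      · intro p hp1 hp2
        simp only [Set.mem_setOf_eq, Set.mem_Icc] at hp1 hp2
        linarith [hp1.1.1, hp2.1.2]
      · intro p hp hNp hpmem
        have hc1 := abs_lt.mp (pert_lt hε0 (hχ₁ p) hNp)
        have hc2 := abs_lt.mp (pert_lt hε0 (hχ₂ p) hNp)
        simp only [Set.mem_union, Set.mem_setOf_eq, Set.mem_Icc] at hpmem ⊢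
        rcases hpmem with ⟨hCc, hDc⟩ | ⟨hCc, hDc⟩
        · exact mul_pos (by linarith [hCc.1, hc1.2]) (by linarith [hDc.1, hc2.2])
        · exact mul_pos_of_neg_of_neg (by linarith [hCc.2, hc1.1]) (by linarith [hDc.2, hc2.1])
    have hcnt_up : ∀ x, primeCount {p | 0 < (C p - χ₁ p / (2 * Real.sqrt p)) *
          (D p - χ₂ p / (2 * Real.sqrt p))} x ≤
        primeCount {p | C p ∈ Icc (-ε) 1 ∧ D p ∈ Icc (-ε) 1} x +
        primeCount {p | C p ∈ Icc (-1) ε ∧ D p ∈ Icc (-1) ε} x + (⌈(1/(2*ε))^2⌉₊ + 1) := by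
      intro x
      have step1 : primeCount {p | 0 < (C p - χ₁ p / (2 * Real.sqrt p)) *
          (D p - χ₂ p / (2 * Real.sqrt p))} x ≤
          primeCount ({p | C p ∈ Icc (-ε) 1 ∧ D p ∈ Icc (-ε) 1} ∪
            {p | C p ∈ Icc (-1) ε ∧ D p ∈ Icc (-1) ε}) x + (⌈(1/(2*ε))^2⌉₊ + 1) := by
        refine count_le_of_subset _ ?_ x
        intro p hp hNp hpmem
        have hc1 := abs_lt.mp (pert_lt hε0 (hχ₁ p) hNp)
        have hc2 := abs_lt.mp (pert_lt hε0 (hχ₂ p) hNp)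
        simp only [Set.mem_setOf_eq] at hpmem
        simp only [Set.mem_union, Set.mem_setOf_eq, Set.mem_Icc]
        rcases mul_pos_iff.mp hpmem with ⟨ha, hb⟩ | ⟨ha, hb⟩
        · exact Or.inl ⟨⟨by linarith [hc1.1], (hC p hp).2⟩, ⟨by linarith [hc2.1], (hD p hp).2⟩⟩
        · exact Or.inr ⟨⟨(hC p hp).1, by linarith [hc1.2]⟩, ⟨(hD p hp).1, by linarith [hc2.2]⟩⟩
      have step2 := count_union_le {p | C p ∈ Icc (-ε) 1 ∧ D p ∈ Icc (-ε) 1}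
        {p | C p ∈ Icc (-1) ε ∧ D p ∈ Icc (-1) ε} x
      omega
    filter_upwards [E1, E2, E3, E4] with x h1 h2 h3 h4
    have hπ : (0:ℝ) < (primePi x : ℝ) := by linarith
    have clow : ((primeCount {p | C p ∈ Icc ε 1 ∧ D p ∈ Icc ε 1} x : ℝ) +
        primeCount {p | C p ∈ Icc (-1) (-ε) ∧ D p ∈ Icc (-1) (-ε)} x) ≤
        (primeCount {p | 0 < (C p - χ₁ p / (2 * Real.sqrt p)) *
          (D p - χ₂ p / (2 * Real.sqrt p))} x : ℝ) + ((⌈(1/(2*ε))^2⌉₊ + 1 : ℕ) : ℝ) := by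
      exact_mod_cast hcnt_low x
    have cup : (primeCount {p | 0 < (C p - χ₁ p / (2 * Real.sqrt p)) *
          (D p - χ₂ p / (2 * Real.sqrt p))} x : ℝ) ≤
        (primeCount {p | C p ∈ Icc (-ε) 1 ∧ D p ∈ Icc (-ε) 1} x : ℝ) +
        (primeCount {p | C p ∈ Icc (-1) ε ∧ D p ∈ Icc (-1) ε} x : ℝ) +
        ((⌈(1/(2*ε))^2⌉₊ + 1 : ℕ) : ℝ) := by
      exact_mod_cast hcnt_up x
    have hlow2 : ((primeCount {p | C p ∈ Icc ε 1 ∧ D p ∈ Icc ε 1} x : ℝ) +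
        (primeCount {p | C p ∈ Icc (-1) (-ε) ∧ D p ∈ Icc (-1) (-ε)} x : ℝ) -
        ((⌈(1/(2*ε))^2⌉₊ + 1 : ℕ) : ℝ)) / (primePi x : ℝ) ≤
        (primeCount {p | 0 < (C p - χ₁ p / (2 * Real.sqrt p)) *
          (D p - χ₂ p / (2 * Real.sqrt p))} x : ℝ) / (primePi x : ℝ) :=
      (div_le_div_iff_of_pos_right hπ).mpr (by linarith)
    have hup2 : (primeCount {p | 0 < (C p - χ₁ p / (2 * Real.sqrt p)) *
          (D p - χ₂ p / (2 * Real.sqrt p))} x : ℝ) / (primePi x : ℝ) ≤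
        ((primeCount {p | C p ∈ Icc (-ε) 1 ∧ D p ∈ Icc (-ε) 1} x : ℝ) +
        (primeCount {p | C p ∈ Icc (-1) ε ∧ D p ∈ Icc (-1) ε} x : ℝ) +
        ((⌈(1/(2*ε))^2⌉₊ + 1 : ℕ) : ℝ)) / (primePi x : ℝ) :=
      (div_le_div_iff_of_pos_right hπ).mpr (by linarith)
    rw [sub_div, add_div] at hlow2
    rw [add_div, add_div] at hup2
    rw [Real.dist_eq, abs_lt]
    have hL := abs_lt.mp hLd
    have hU := abs_lt.mp hUd
    have hh1 := abs_lt.mp h1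
    have hh2 := abs_lt.mp h2
    constructor
    · linarith
    · linarith
  · rw [HasNaturalDensity, Metric.tendsto_nhds]
    intro η hη
    obtain ⟨ε, hε0, hε1, hW⟩ : ∃ ε : ℝ, 0 < ε ∧ ε ≤ 1 ∧ |K ε - K (-ε)| < η/8 := by
      have hKn : Continuous fun c : ℝ => K (-c) := K_cont.comp continuous_neg
      have hGc : Continuous (fun c : ℝ => |K c - K (-c)|) := (K_cont.sub hKn).abs
      obtain ⟨δ, hδ0, hδ⟩ := Metric.continuousAt_iff.mp hGc.continuousAt (η/8) (by linarith)
      have hd : dist (min (δ/2) 1) 0 < δ := by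
        rw [Real.dist_eq, sub_zero, abs_of_pos (by positivity)]
        calc min (δ/2) 1 ≤ δ/2 := min_le_left _ _
          _ < δ := by linarith
      have h1 := hδ hd
      rw [Real.dist_eq] at h1
      have hG0 : |K (0:ℝ) - K (-(0:ℝ))| = 0 := by rw [neg_zero]; simp
      rw [hG0, sub_zero] at h1
      exact ⟨min (δ/2) 1, by positivity, min_le_right _ _, lt_of_le_of_lt (le_abs_self _) h1⟩
    have hm5 : (muST (Icc (-ε) ε)).toReal = K ε - K (-ε) :=
      muST_Icc (by linarith) (by linarith) hε1
    have hm6 : (muST (Icc (-1:ℝ) 1)).toReal = 1 := by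
      rw [muST_Icc le_rfl (by linarith) le_rfl, K_one, K_neg_one, sub_zero]
    have hTT := (hST (-ε) ε (-1) 1 (by linarith) (by linarith) hε1 le_rfl (by linarith)
      le_rfl).add (hST (-1) 1 (-ε) ε le_rfl (by linarith) le_rfl (by linarith) (by linarith) hε1)
    rw [hm5, hm6, mul_one, one_mul] at hTT
    have E1 := (Metric.tendsto_nhds.mp hTT (η/4) (by linarith)).mono
      (fun x hx => by rwa [Real.dist_eq] at hx)
    have hN0 : Tendsto (fun x : ℕ => ((⌈(1/(2*ε))^2⌉₊ + 1 : ℕ) : ℝ)/(primePi x : ℝ))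
        atTop (nhds 0) := Tendsto.div_atTop tendsto_const_nhds pi_top
    have E3 := (Metric.tendsto_nhds.mp hN0 (η/4) (by linarith)).mono
      (fun x hx => by rw [Real.dist_eq, sub_zero] at hx; exact lt_of_le_of_lt (le_abs_self _) hx)
    have E4 := pi_top.eventually_ge_atTop 1
    have hcnt : ∀ x, primeCount {p | (C p - χ₁ p / (2 * Real.sqrt p)) *
          (D p - χ₂ p / (2 * Real.sqrt p)) = 0} x ≤
        primeCount {p | C p ∈ Icc (-ε) ε ∧ D p ∈ Icc (-1) 1} x +
        primeCount {p | C p ∈ Icc (-1) 1 ∧ D p ∈ Icc (-ε) ε} x + (⌈(1/(2*ε))^2⌉₊ + 1) := by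
      intro x
      have step1 : primeCount {p | (C p - χ₁ p / (2 * Real.sqrt p)) *
            (D p - χ₂ p / (2 * Real.sqrt p)) = 0} x ≤
          primeCount ({p | C p ∈ Icc (-ε) ε ∧ D p ∈ Icc (-1) 1} ∪
            {p | C p ∈ Icc (-1) 1 ∧ D p ∈ Icc (-ε) ε}) x + (⌈(1/(2*ε))^2⌉₊ + 1) := by
        refine count_le_of_subset _ ?_ x
        intro p hp hNp hpmem
        have hc1 := abs_lt.mp (pert_lt hε0 (hχ₁ p) hNp)
        have hc2 := abs_lt.mp (pert_lt hε0 (hχ₂ p) hNp)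
        simp only [Set.mem_setOf_eq] at hpmem
        simp only [Set.mem_union, Set.mem_setOf_eq, Set.mem_Icc]
        rcases mul_eq_zero.mp hpmem with ha | hb
        · have hCp : C p = χ₁ p / (2 * Real.sqrt p) := by linarith
          exact Or.inl ⟨⟨by rw [hCp]; linarith, by rw [hCp]; linarith⟩,
            ⟨(hD p hp).1, (hD p hp).2⟩⟩
        · have hDp : D p = χ₂ p / (2 * Real.sqrt p) := by linarith
          exact Or.inr ⟨⟨(hC p hp).1, (hC p hp).2⟩,
            ⟨by rw [hDp]; linarith, by rw [hDp]; linarith⟩⟩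
      have step2 := count_union_le {p | C p ∈ Icc (-ε) ε ∧ D p ∈ Icc (-1) 1}
        {p | C p ∈ Icc (-1) 1 ∧ D p ∈ Icc (-ε) ε} x
      omega
    filter_upwards [E1, E3, E4] with x h1 h3 h4
    have hπ : (0:ℝ) < (primePi x : ℝ) := by linarith
    have ccast : (primeCount {p | (C p - χ₁ p / (2 * Real.sqrt p)) *
          (D p - χ₂ p / (2 * Real.sqrt p)) = 0} x : ℝ) ≤
        (primeCount {p | C p ∈ Icc (-ε) ε ∧ D p ∈ Icc (-1) 1} x : ℝ) +
        (primeCount {p | C p ∈ Icc (-1) 1 ∧ D p ∈ Icc (-ε) ε} x : ℝ) +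
        ((⌈(1/(2*ε))^2⌉₊ + 1 : ℕ) : ℝ) := by exact_mod_cast hcnt x
    have hup2 : (primeCount {p | (C p - χ₁ p / (2 * Real.sqrt p)) *
          (D p - χ₂ p / (2 * Real.sqrt p)) = 0} x : ℝ) / (primePi x : ℝ) ≤
        ((primeCount {p | C p ∈ Icc (-ε) ε ∧ D p ∈ Icc (-1) 1} x : ℝ) +
        (primeCount {p | C p ∈ Icc (-1) 1 ∧ D p ∈ Icc (-ε) ε} x : ℝ) +
        ((⌈(1/(2*ε))^2⌉₊ + 1 : ℕ) : ℝ)) / (primePi x : ℝ) :=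
      (div_le_div_iff_of_pos_right hπ).mpr ccast
    rw [add_div, add_div] at hup2
    rw [Real.dist_eq, sub_zero, abs_of_nonneg (by positivity)]
    have hh1 := abs_lt.mp h1
    have hWa := abs_lt.mp hW
    linarith
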